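/- Let n ≥ 2 and let g1, g2, g3 be pairwise distinct elements of the dihedral Artin group DA_n, with associated precells having vertex sets V(g_i) and edge sets E(g_i). Suppose that (1) E(g1) ∩ E(g2) ≠ ∅ (the precells of g1 and g2 share an edge), (2) E(g1) ∩ E(g3) ≠ ∅, and (3) the set V(g1) ∩ V(g2) ∩ V(g3) has at most one element. Then V(g2) ∩ V(g3) has at most one element (the precells of g2 and g3 intersect in at most one point). -/

import Mathlib

/-- The alternating product `x y x y ⋯` with `n` factors. -/
def altProd {G : Type*} [Monoid G] : ℕ → G → G → G
  | 0, _, _ => 1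
  | n + 1, x, y => x * altProd n y x

/-- The alternating word `x y x y ⋯` with `n` letters, as a list. -/
def altList : ℕ → Bool → Bool → List Bool
  | 0, _, _ => []
  | n + 1, x, y => x :: altList n y x

/-- The relation `prod(a,b;n) = prod(b,a;n)` of the dihedral Artin group, with
`a := true` and `b := false`. -/
def dihedralRels (n : ℕ) : Set (FreeGroup Bool) :=
  { altProd n (FreeGroup.of true) (FreeGroup.of false) *
      (altProd n (FreeGroup.of false) (FreeGroup.of true))⁻¹ }

/-- The dihedral Artin group `DA_n = ⟨a, b ∣ prod(a,b;n) = prod(b,a;n)⟩`. -/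
abbrev DihedralArtinGroup (n : ℕ) := PresentedGroup (dihedralRels n)

/-- The standard generators of `DA_n` (`a := true`, `b := false`). -/
def daGen (n : ℕ) (s : Bool) : DihedralArtinGroup n := PresentedGroup.of s

/-- The image in `DA_n` of a word in the generators `a, b`. -/
def daWord (n : ℕ) (l : List Bool) : DihedralArtinGroup n := (l.map (daGen n)).prod

/-- The vertex set of the precell with left tip `g`: elements `g·π(p)` where `p` is a
prefix of `prod(a,b;n)` or of `prod(b,a;n)`. -/
def precellVerts (n : ℕ) (g : DihedralArtinGroup n) : Set (DihedralArtinGroup n) :=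
  { x | ∃ p : List Bool,
      (p <+: altList n true false ∨ p <+: altList n false true) ∧
        x = g * daWord n p }

/-- The edge set of the precell with left tip `g`: edges `(g·π(p), s)` of the Cayley
graph where `p` and `p ++ [s]` are consecutive prefixes of `prod(a,b;n)` or of
`prod(b,a;n)`. -/
def precellEdges (n : ℕ) (g : DihedralArtinGroup n) :
    Set (DihedralArtinGroup n × Bool) :=
  { e | ∃ (p : List Bool) (s : Bool),
      ((p <+: altList n true false ∧ p ++ [s] <+: altList n true false) ∨
        (p <+: altList n false true ∧ p ++ [s] <+: altList n false true)) ∧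
      e = (g * daWord n p, s) }

set_option linter.unusedSectionVars false
set_option maxHeartbeats 1000000

namespace DAproof

/-! ### altProd basic lemmas -/

theorem map_altProd {G H : Type*} [Monoid G] [Monoid H] (φ : G →* H) :
    ∀ (k : ℕ) (x y : G), φ (altProd k x y) = altProd k (φ x) (φ y) := by
  intro k
  induction k with
  | zero => intro x y; simp [altProd]
  | succ m ih => intro x y; simp [altProd, ih]

theorem altProd_even {G : Type*} [Monoid G] :
    ∀ (m : ℕ) (x y : G), altProd (2 * m) x y = (x * y) ^ m := by
  intro m
  induction m with
  | zero => intro x y; simp [altProd]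
  | succ k ih =>
    intro x y
    have : 2 * (k + 1) = (2 * k) + 1 + 1 := by ring
    rw [this]
    show x * altProd (2 * k + 1) y x = (x * y) ^ (k + 1)
    show x * (y * altProd (2 * k) x y) = (x * y) ^ (k + 1)
    rw [ih, pow_succ', mul_assoc]

theorem altProd_odd {G : Type*} [Monoid G] (m : ℕ) (x y : G) :
    altProd (2 * m + 1) x y = (x * y) ^ m * x := by
  induction m generalizing x y with
  | zero => simp [altProd]
  | succ k ih =>
    have : 2 * (k + 1) + 1 = (2 * k + 1) + 1 + 1 := by ring
    rw [this]
    show x * altProd (2 * k + 1 + 1) y x = (x * y) ^ (k + 1) * x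
    show x * (y * altProd (2 * k + 1) x y) = (x * y) ^ (k + 1) * x
    rw [ih, pow_succ', mul_assoc, mul_assoc]

/-! ### word layer -/

/-- The letter at position `k` (0-based) of the alternating word starting with `γ`;
equivalently the next letter after the prefix of length `k`. -/
def nxt (γ : Bool) (k : ℕ) : Bool := if k % 2 = 0 then γ else !γ

/-- The last letter of the alternating word of length `k` starting with `γ`. -/
def lst (γ : Bool) (k : ℕ) : Bool := nxt γ (k - 1)

/-- The alternating word of length `k` starting with letter `γ`. -/
def W (γ : Bool) (k : ℕ) : List Bool := altList k γ (!γ)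

@[simp] theorem nxt_zero (γ : Bool) : nxt γ 0 = γ := rfl

theorem nxt_succ' (γ : Bool) (k : ℕ) : nxt γ (k + 1) = !(nxt γ k) := by
  unfold nxt
  rcases Nat.even_or_odd k with ⟨m, hm⟩ | ⟨m, hm⟩ <;> subst hm
  · have h1 : (m + m) % 2 = 0 := by omega
    have h2 : (m + m + 1) % 2 = 1 := by omega
    simp [h1, h2]
  · have h1 : (2 * m + 1) % 2 = 1 := by omega
    have h2 : (2 * m + 1 + 1) % 2 = 0 := by omega
    simp [h1, h2]

theorem nxt_succ (γ : Bool) (k : ℕ) : nxt γ (k + 1) = nxt (!γ) k := by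
  induction k generalizing γ with
  | zero => simp [nxt_succ']
  | succ m ih => rw [nxt_succ' γ (m+1), nxt_succ' (!γ) m, ← ih]

theorem nxt_not (γ : Bool) (k : ℕ) : nxt (!γ) k = !(nxt γ k) := by
  unfold nxt; split <;> simp

theorem nxt_add (γ : Bool) (i j : ℕ) : nxt γ (i + j) = nxt (nxt γ i) j := by
  induction j with
  | zero => simp
  | succ m ih => rw [show i + (m+1) = (i + m) + 1 from rfl, nxt_succ', ih, nxt_succ']

theorem nxt_inj {γ γ' : Bool} {k : ℕ} (h : nxt γ k = nxt γ' k) : γ = γ' := by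
  unfold nxt at h; rcases γ <;> rcases γ' <;> revert h <;> split <;> simp

theorem lst_eq_not_nxt (γ : Bool) {k : ℕ} (hk : 1 ≤ k) : lst γ k = !(nxt γ k) := by
  obtain ⟨m, rfl⟩ : ∃ m, k = m + 1 := ⟨k - 1, by omega⟩
  unfold lst
  simp [nxt_succ']

@[simp] theorem W_zero (γ : Bool) : W γ 0 = [] := rfl

theorem W_succ (γ : Bool) (k : ℕ) : W γ (k + 1) = γ :: W (!γ) k := by
  show γ :: altList k (!γ) γ = γ :: altList k (!γ) (!(!γ))
  simp

theorem W_length (γ : Bool) (k : ℕ) : (W γ k).length = k := by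
  induction k generalizing γ with
  | zero => rfl
  | succ m ih => rw [W_succ]; simp [ih]

theorem W_append (γ : Bool) (i j : ℕ) : W γ (i + j) = W γ i ++ W (nxt γ i) j := by
  induction i generalizing γ with
  | zero => simp
  | succ m ih =>
    have h1 : m + 1 + j = (m + j) + 1 := by omega
    rw [h1, W_succ, W_succ, ih, nxt_succ]
    rfl

theorem W_one (γ : Bool) : W γ 1 = [γ] := rfl

theorem W_snoc (γ : Bool) (i : ℕ) : W γ (i + 1) = W γ i ++ [nxt γ i] := by
  rw [W_append, W_one]

theorem altList_eq_W (k : ℕ) (x : Bool) : altList k x (!x) = W x k := rfl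

theorem take_altList : ∀ (i m : ℕ) (x y : Bool), i ≤ m →
    (altList m x y).take i = altList i x y := by
  intro i
  induction i with
  | zero => intro m x y _; simp [altList]
  | succ j ih =>
    intro m x y him
    obtain ⟨m', rfl⟩ : ∃ m', m = m' + 1 := ⟨m - 1, by omega⟩
    show (x :: altList m' y x).take (j+1) = x :: altList j y x
    simp only [List.take_succ_cons, List.cons.injEq, true_and]
    exact ih m' y x (by omega)

theorem prefix_W {p : List Bool} {m : ℕ} {γ : Bool} (h : p <+: W γ m) :
    ∃ i, i ≤ m ∧ p = W γ i := by
  refine ⟨p.length, ?_, ?_⟩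
  · have := h.length_le; rwa [W_length] at this
  · have h2 : p.length ≤ m := by have := h.length_le; rwa [W_length] at this
    have h1 : p = (W γ m).take p.length := by
      rw [List.prefix_iff_eq_take] at h; exact h
    conv_lhs => rw [h1]
    unfold W
    exact take_altList p.length m γ (!γ) h2

/-! ### DA layer -/

section DA
variable (n : ℕ)

theorem daWord_append (l₁ l₂ : List Bool) :
    daWord n (l₁ ++ l₂) = daWord n l₁ * daWord n l₂ := by
  unfold daWord; rw [List.map_append, List.prod_append]

theorem daWord_altList (k : ℕ) (x y : Bool) :
    daWord n (altList k x y) = altProd k (daGen n x) (daGen n y) := by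
  induction k generalizing x y with
  | zero => rfl
  | succ m ih =>
    show daWord n (x :: altList m y x) = daGen n x * altProd m (daGen n y) (daGen n x)
    rw [← ih]
    unfold daWord
    simp

/-- `S n γ k` : the image in `DA_n` of the alternating word of length `k` starting at `γ`. -/
def S (γ : Bool) (k : ℕ) : DihedralArtinGroup n := daWord n (W γ k)

@[simp] theorem S_zero (γ : Bool) : S n γ 0 = 1 := rfl

theorem S_mul (γ : Bool) (i j : ℕ) : S n γ (i + j) = S n γ i * S n (nxt γ i) j := by
  unfold S; rw [W_append, daWord_append]

theorem daGen_eq_mk (x : Bool) :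
    daGen n x = PresentedGroup.mk (dihedralRels n) (FreeGroup.of x) := rfl

theorem da_rel :
    altProd n (daGen n true) (daGen n false) = altProd n (daGen n false) (daGen n true) := by
  have hmem : (altProd n (FreeGroup.of true) (FreeGroup.of false) *
      (altProd n (FreeGroup.of false) (FreeGroup.of true))⁻¹) ∈
      Subgroup.normalClosure (dihedralRels n) :=
    Subgroup.subset_normalClosure rfl
  have h1 : PresentedGroup.mk (dihedralRels n)
      (altProd n (FreeGroup.of true) (FreeGroup.of false) *
        (altProd n (FreeGroup.of false) (FreeGroup.of true))⁻¹) = 1 := by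
    exact (QuotientGroup.eq_one_iff _).mpr hmem
  rw [map_mul, map_inv] at h1
  rw [map_altProd, map_altProd] at h1
  rw [← daGen_eq_mk, ← daGen_eq_mk] at h1
  exact mul_inv_eq_one.mp h1

theorem S_top (γ : Bool) : S n γ n = S n true n := by
  cases γ
  · show daWord n (altList n false (!false)) = daWord n (W true n)
    have : (!false) = true := rfl
    rw [this]
    show daWord n (altList n false true) = daWord n (altList n true (!true))
    have h2 : (!true) = false := rfl
    rw [h2, daWord_altList, daWord_altList, da_rel]
  · rfl

/-- The Garside element `Δ`. -/
def Dl : DihedralArtinGroup n := S n true n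

theorem S_delta (γ : Bool) (d : ℕ) (hd : d ≤ n) :
    S n γ d * S n (nxt γ d) (n - d) = Dl n := by
  have : d + (n - d) = n := by omega
  rw [← S_mul, this, S_top]; rfl

/-! ### the length homomorphism -/

theorem lift_rel_ell :
    ∀ r ∈ dihedralRels n, FreeGroup.lift (fun _ : Bool => Multiplicative.ofAdd (1 : ℤ)) r = 1 := by
  intro r hr
  rcases hr with rfl
  rw [map_mul, map_inv, map_altProd, map_altProd]
  simp only [FreeGroup.lift_apply_of]
  exact mul_inv_eq_one.mpr rfl

def ell : DihedralArtinGroup n →* Multiplicative ℤ := PresentedGroup.toGroup (lift_rel_ell n)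

theorem ell_daWord (l : List Bool) :
    ell n (daWord n l) = Multiplicative.ofAdd (l.length : ℤ) := by
  induction l with
  | nil => simp [daWord]
  | cons x t ih =>
    have : daWord n (x :: t) = daGen n x * daWord n t := by
      unfold daWord; simp
    rw [this, map_mul, ih]
    have hx : ell n (daGen n x) = Multiplicative.ofAdd (1 : ℤ) := by
      unfold ell daGen
      exact PresentedGroup.toGroup.of _
    rw [hx, ← ofAdd_add]
    congr 1
    simp only [List.length_cons]
    push_cast
    ring

theorem ell_S (γ : Bool) (k : ℕ) : ell n (S n γ k) = Multiplicative.ofAdd (k : ℤ) := by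
  unfold S; rw [ell_daWord, W_length]

theorem S_inj_len {γ γ' : Bool} {k k' : ℕ} (h : S n γ k = S n γ' k') : k = k' := by
  have := congrArg (ell n) h
  rw [ell_S, ell_S] at this
  have h2 : (k : ℤ) = (k' : ℤ) := by exact_mod_cast Multiplicative.ofAdd.injective this
  exact_mod_cast h2

end DA

/-! ### generic reduced-word push machine (free product normal forms) -/

section Machine
variable {A B : Type*} [AddGroup A] [AddGroup B] [DecidableEq A] [DecidableEq B]

/-- Reduced alternating words over `A ⊕ B`. -/
def Red (l : List (A ⊕ B)) : Prop :=
  l.Chain' (fun s t => s.isLeft ≠ t.isLeft) ∧ ∀ s ∈ l, s ≠ Sum.inl 0 ∧ s ≠ Sum.inr 0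

theorem red_nil : Red ([] : List (A ⊕ B)) := ⟨List.isChain_nil, by simp⟩

theorem red_tail {s : A ⊕ B} {t : List (A ⊕ B)} (h : Red (s :: t)) : Red t :=
  ⟨h.1.tail, fun z hz => h.2 z (List.mem_cons_of_mem _ hz)⟩

theorem red_cons_inl {y : A} {t : List (A ⊕ B)} (h : Red (Sum.inl y :: t)) :
    t = [] ∨ ∃ (z : B) (t' : List (A ⊕ B)), t = Sum.inr z :: t' := by
  match t with
  | [] => exact Or.inl rfl
  | Sum.inr z :: t' => exact Or.inr ⟨z, t', rfl⟩
  | Sum.inl w :: t' =>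
    exfalso
    have := List.isChain_cons_cons.mp h.1
    simp at this

theorem red_cons_inr {y : B} {t : List (A ⊕ B)} (h : Red (Sum.inr y :: t)) :
    t = [] ∨ ∃ (z : A) (t' : List (A ⊕ B)), t = Sum.inl z :: t' := by
  match t with
  | [] => exact Or.inl rfl
  | Sum.inl z :: t' => exact Or.inr ⟨z, t', rfl⟩
  | Sum.inr w :: t' =>
    exfalso
    have := List.isChain_cons_cons.mp h.1
    simp at this

/-- Push a left-syllable onto a reduced word. -/
def pushLf (x : A) : List (A ⊕ B) → List (A ⊕ B)
  | [] => if x = 0 then [] else [Sum.inl x]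
  | (Sum.inl y) :: t => if x + y = 0 then t else Sum.inl (x + y) :: t
  | (Sum.inr y) :: t => if x = 0 then (Sum.inr y) :: t else Sum.inl x :: (Sum.inr y) :: t

/-- Push a right-syllable onto a reduced word. -/
def pushRf (x : B) : List (A ⊕ B) → List (A ⊕ B)
  | [] => if x = 0 then [] else [Sum.inr x]
  | (Sum.inr y) :: t => if x + y = 0 then t else Sum.inr (x + y) :: t
  | (Sum.inl y) :: t => if x = 0 then (Sum.inl y) :: t else Sum.inr x :: (Sum.inl y) :: t

theorem red_pushLf (x : A) {l : List (A ⊕ B)} (h : Red l) : Red (pushLf x l) := by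
  match l with
  | [] =>
    by_cases hx : x = 0
    · rw [show pushLf x ([] : List (A ⊕ B)) = [] from by simp [pushLf, hx]]; exact red_nil
    · rw [show pushLf x ([] : List (A ⊕ B)) = [Sum.inl x] from by simp [pushLf, hx]]
      exact ⟨List.isChain_singleton _, by simp [hx]⟩
  | (Sum.inl y) :: t =>
    by_cases hxy : x + y = 0 <;> simp [pushLf, hxy]
    · exact red_tail h
    · constructor
      · exact List.isChain_cons.mpr ⟨fun z hz => by
          have := List.isChain_cons.mp h.1
          exact this.1 z hz, (red_tail h).1⟩
      · intro s hs
        rcases List.mem_cons.mp hs with rfl | hs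
        · simp [hxy]
        · exact h.2 s (List.mem_cons_of_mem _ hs)
  | (Sum.inr y) :: t =>
    by_cases hx : x = 0 <;> simp [pushLf, hx]
    · exact h
    · constructor
      · exact List.isChain_cons_cons.mpr ⟨by simp, h.1⟩
      · intro s hs
        rcases List.mem_cons.mp hs with rfl | hs
        · simp [hx]
        · exact h.2 s hs

theorem red_pushRf (x : B) {l : List (A ⊕ B)} (h : Red l) : Red (pushRf x l) := by
  match l with
  | [] =>
    by_cases hx : x = 0
    · rw [show pushRf x ([] : List (A ⊕ B)) = [] from by simp [pushRf, hx]]; exact red_nil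
    · rw [show pushRf x ([] : List (A ⊕ B)) = [Sum.inr x] from by simp [pushRf, hx]]
      exact ⟨List.isChain_singleton _, by simp [hx]⟩
  | (Sum.inr y) :: t =>
    by_cases hxy : x + y = 0 <;> simp [pushRf, hxy]
    · exact red_tail h
    · constructor
      · exact List.isChain_cons.mpr ⟨fun z hz => by
          have := List.isChain_cons.mp h.1
          exact this.1 z hz, (red_tail h).1⟩
      · intro s hs
        rcases List.mem_cons.mp hs with rfl | hs
        · simp [hxy]
        · exact h.2 s (List.mem_cons_of_mem _ hs)
  | (Sum.inl y) :: t =>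
    by_cases hx : x = 0 <;> simp [pushRf, hx]
    · exact h
    · constructor
      · exact List.isChain_cons_cons.mpr ⟨by simp, h.1⟩
      · intro s hs
        rcases List.mem_cons.mp hs with rfl | hs
        · simp [hx]
        · exact h.2 s hs

theorem pushLf_zero {l : List (A ⊕ B)} (h : Red l) : pushLf 0 l = l := by
  match l with
  | [] => simp [pushLf]
  | (Sum.inl y) :: t =>
    have hy : y ≠ 0 := by
      intro hy0
      exact (h.2 _ List.mem_cons_self).1 (by rw [hy0])
    simp [pushLf, hy]
  | (Sum.inr y) :: t => simp [pushLf]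

theorem pushRf_zero {l : List (A ⊕ B)} (h : Red l) : pushRf 0 l = l := by
  match l with
  | [] => simp [pushRf]
  | (Sum.inr y) :: t =>
    have hy : y ≠ 0 := by
      intro hy0
      exact (h.2 _ List.mem_cons_self).2 (by rw [hy0])
    simp [pushRf, hy]
  | (Sum.inl y) :: t => simp [pushRf]

theorem pushLf_add (x x' : A) {l : List (A ⊕ B)} (h : Red l) :
    pushLf x (pushLf x' l) = pushLf (x + x') l := by
  match l with
  | [] =>
    by_cases hx' : x' = 0
    · subst hx'; rw [add_zero, pushLf, if_pos rfl]
    · rw [show pushLf x' ([] : List (A ⊕ B)) = [Sum.inl x'] from by simp [pushLf, hx']]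
      show (if x + x' = 0 then ([] : List (A ⊕ B)) else Sum.inl (x + x') :: []) = _
      by_cases hxx : x + x' = 0 <;> simp [pushLf, hxx]
  | (Sum.inl y) :: t =>
    by_cases hx'y : x' + y = 0
    · rw [show pushLf x' (Sum.inl y :: t) = t from by simp [pushLf, hx'y]]
      have hxy : x + x' + y = x := by rw [add_assoc, hx'y, add_zero]
      rw [show pushLf (x + x') (Sum.inl y :: t) =
          (if x + x' + y = 0 then t else Sum.inl (x + x' + y) :: t) from rfl]
      rw [hxy]
      rcases red_cons_inl h with rfl | ⟨z, t', rfl⟩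
      · by_cases hx : x = 0 <;> simp [pushLf, hx]
      · by_cases hx : x = 0 <;> simp [pushLf, hx]
    · rw [show pushLf x' (Sum.inl y :: t) = Sum.inl (x' + y) :: t from by simp [pushLf, hx'y]]
      show (if x + (x' + y) = 0 then t else Sum.inl (x + (x' + y)) :: t) = _
      rw [show pushLf (x + x') (Sum.inl y :: t) =
          (if x + x' + y = 0 then t else Sum.inl (x + x' + y) :: t) from rfl]
      rw [add_assoc]
  | (Sum.inr y) :: t =>
    by_cases hx' : x' = 0
    · subst hx'; rw [add_zero]
      rw [show pushLf (0 : A) (Sum.inr y :: t) = Sum.inr y :: t from by simp [pushLf]]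
    · rw [show pushLf x' (Sum.inr y :: t) = Sum.inl x' :: Sum.inr y :: t from by
        simp [pushLf, hx']]
      show (if x + x' = 0 then Sum.inr y :: t else Sum.inl (x + x') :: Sum.inr y :: t) = _
      by_cases hxx : x + x' = 0 <;> simp [pushLf, hxx]

theorem pushRf_add (x x' : B) {l : List (A ⊕ B)} (h : Red l) :
    pushRf x (pushRf x' l) = pushRf (x + x') l := by
  match l with
  | [] =>
    by_cases hx' : x' = 0
    · subst hx'; rw [add_zero, pushRf, if_pos rfl]
    · rw [show pushRf x' ([] : List (A ⊕ B)) = [Sum.inr x'] from by simp [pushRf, hx']]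
      show (if x + x' = 0 then ([] : List (A ⊕ B)) else Sum.inr (x + x') :: []) = _
      by_cases hxx : x + x' = 0 <;> simp [pushRf, hxx]
  | (Sum.inr y) :: t =>
    by_cases hx'y : x' + y = 0
    · rw [show pushRf x' (Sum.inr y :: t) = t from by simp [pushRf, hx'y]]
      have hxy : x + x' + y = x := by rw [add_assoc, hx'y, add_zero]
      rw [show pushRf (x + x') (Sum.inr y :: t) =
          (if x + x' + y = 0 then t else Sum.inr (x + x' + y) :: t) from rfl]
      rw [hxy]
      rcases red_cons_inr h with rfl | ⟨z, t', rfl⟩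
      · by_cases hx : x = 0 <;> simp [pushRf, hx]
      · by_cases hx : x = 0 <;> simp [pushRf, hx]
    · rw [show pushRf x' (Sum.inr y :: t) = Sum.inr (x' + y) :: t from by simp [pushRf, hx'y]]
      show (if x + (x' + y) = 0 then t else Sum.inr (x + (x' + y)) :: t) = _
      rw [show pushRf (x + x') (Sum.inr y :: t) =
          (if x + x' + y = 0 then t else Sum.inr (x + x' + y) :: t) from rfl]
      rw [add_assoc]
  | (Sum.inl y) :: t =>
    by_cases hx' : x' = 0
    · subst hx'; rw [add_zero]
      rw [show pushRf (0 : B) (Sum.inl y :: t) = Sum.inl y :: t from by simp [pushRf]]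
    · rw [show pushRf x' (Sum.inl y :: t) = Sum.inr x' :: Sum.inl y :: t from by
        simp [pushRf, hx']]
      show (if x + x' = 0 then Sum.inl y :: t else Sum.inr (x + x') :: Sum.inl y :: t) = _
      by_cases hxx : x + x' = 0 <;> simp [pushRf, hxx]

/-- The type of reduced words. -/
def RWord (A B : Type*) [AddGroup A] [AddGroup B] : Type _ := {l : List (A ⊕ B) // Red l}

/-- Push a left-syllable, as a permutation of reduced words. -/
def pushL (x : A) : Equiv.Perm (RWord A B) where
  toFun l := ⟨pushLf x l.1, red_pushLf x l.2⟩
  invFun l := ⟨pushLf (-x) l.1, red_pushLf _ l.2⟩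
  left_inv l := Subtype.ext (by
    show pushLf (-x) (pushLf x l.1) = l.1
    rw [pushLf_add _ _ l.2, neg_add_cancel, pushLf_zero l.2])
  right_inv l := Subtype.ext (by
    show pushLf x (pushLf (-x) l.1) = l.1
    rw [pushLf_add _ _ l.2, add_neg_cancel, pushLf_zero l.2])

def pushR (x : B) : Equiv.Perm (RWord A B) where
  toFun l := ⟨pushRf x l.1, red_pushRf x l.2⟩
  invFun l := ⟨pushRf (-x) l.1, red_pushRf _ l.2⟩
  left_inv l := Subtype.ext (by
    show pushRf (-x) (pushRf x l.1) = l.1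
    rw [pushRf_add _ _ l.2, neg_add_cancel, pushRf_zero l.2])
  right_inv l := Subtype.ext (by
    show pushRf x (pushRf (-x) l.1) = l.1
    rw [pushRf_add _ _ l.2, add_neg_cancel, pushRf_zero l.2])

theorem pushL_apply (x : A) (l : RWord A B) : (pushL x l).1 = pushLf x l.1 := rfl
theorem pushR_apply (x : B) (l : RWord A B) : (pushR x l).1 = pushRf x l.1 := rfl

theorem pushL_mul (x x' : A) : (pushL x * pushL x' : Equiv.Perm (RWord A B)) = pushL (x + x') := by
  apply Equiv.ext; intro l
  simp only [Equiv.Perm.mul_apply]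
  exact Subtype.ext (pushLf_add x x' l.2)

theorem pushR_mul (x x' : B) : (pushR x * pushR x' : Equiv.Perm (RWord A B)) = pushR (x + x') := by
  apply Equiv.ext; intro l
  simp only [Equiv.Perm.mul_apply]
  exact Subtype.ext (pushRf_add x x' l.2)

theorem pushL_zero : (pushL 0 : Equiv.Perm (RWord A B)) = 1 := by
  apply Equiv.ext; intro l
  simp only [Equiv.Perm.one_apply]
  exact Subtype.ext (pushLf_zero l.2)

theorem pushR_zero : (pushR 0 : Equiv.Perm (RWord A B)) = 1 := by
  apply Equiv.ext; intro l
  simp only [Equiv.Perm.one_apply]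
  exact Subtype.ext (pushRf_zero l.2)

theorem pushR_pow (x : B) (m : ℕ) :
    (pushR x : Equiv.Perm (RWord A B)) ^ m = pushR (m • x) := by
  induction m with
  | zero => simp [pushR_zero]
  | succ k ih =>
    rw [pow_succ, ih, pushR_mul, succ_nsmul]

end Machine

/-! ### homomorphisms out of DA_n -/

section Hom
variable (n : ℕ) {G : Type*} [Group G]

theorem lift_rel_hom (fa fb : G) (h : altProd n fa fb = altProd n fb fa) :
    ∀ r ∈ dihedralRels n, FreeGroup.lift (fun s => cond s fa fb) r = 1 := by
  intro r hr; rcases hr with rfl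
  rw [map_mul, map_inv, map_altProd, map_altProd]
  simp only [FreeGroup.lift_apply_of]
  show altProd n fa fb * (altProd n fb fa)⁻¹ = 1
  rw [h, mul_inv_cancel]

/-- The homomorphism `DA_n → G` sending `a`, `b` to elements satisfying the relation. -/
def mkDA (fa fb : G) (h : altProd n fa fb = altProd n fb fa) :
    DihedralArtinGroup n →* G :=
  PresentedGroup.toGroup (lift_rel_hom n fa fb h)

theorem mkDA_gen (fa fb : G) (h : altProd n fa fb = altProd n fb fa) (s : Bool) :
    mkDA n fa fb h (daGen n s) = cond s fa fb :=
  PresentedGroup.toGroup.of _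

theorem conj_pow'' (c r : G) (m : ℕ) : (c * r * c⁻¹) ^ m = c * r ^ m * c⁻¹ := by
  induction m with
  | zero => simp
  | succ k ih => rw [pow_succ, ih, pow_succ]; group

/-- `S γ 2 = γ · ¬γ`. -/
theorem S_two (γ : Bool) : S n γ 2 = daGen n γ * daGen n (!γ) := by
  show daWord n [γ, !γ] = _
  unfold daWord; simp

theorem S_one (γ : Bool) : S n γ 1 = daGen n γ := by
  show daWord n [γ] = _
  unfold daWord; simp

theorem nxt_even (γ : Bool) (k : ℕ) : nxt γ (2 * k) = γ := by
  unfold nxt; simp [Nat.mul_mod_right]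

theorem nxt_odd (γ : Bool) (k : ℕ) : nxt γ (2 * k + 1) = !γ := by
  unfold nxt
  have : (2 * k + 1) % 2 = 1 := by omega
  simp [this]

theorem nxt_two (γ : Bool) : nxt γ 2 = γ := rfl

theorem S_even_eq (γ : Bool) (k : ℕ) :
    S n γ (2 * k) = (daGen n γ * daGen n (!γ)) ^ k := by
  induction k with
  | zero => simp
  | succ j ih =>
    have h1 : 2 * (j + 1) = 2 + 2 * j := by ring
    rw [h1, S_mul, nxt_two, S_two, ih, pow_succ']

theorem S_odd_eq (γ : Bool) (k : ℕ) :
    S n γ (2 * k + 1) = (daGen n γ * daGen n (!γ)) ^ k * daGen n γ := by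
  rw [S_mul, nxt_even, S_one, S_even_eq]

theorem mkDA_S_even (fa fb : G) (h : altProd n fa fb = altProd n fb fa) (γ : Bool) (k : ℕ) :
    mkDA n fa fb h (S n γ (2 * k)) = (cond γ (fa * fb) (fb * fa)) ^ k := by
  rw [S_even_eq, map_pow, map_mul]
  simp only [mkDA_gen]
  cases γ <;> rfl

theorem mkDA_S_odd (fa fb : G) (h : altProd n fa fb = altProd n fb fa) (γ : Bool) (k : ℕ) :
    mkDA n fa fb h (S n γ (2 * k + 1)) =
      (cond γ (fa * fb) (fb * fa)) ^ k * cond γ fa fb := by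
  rw [S_odd_eq, map_mul, map_pow, map_mul]
  simp only [mkDA_gen]
  cases γ <;> rfl

end Hom

/-! ### the odd reduced-word invariant -/

section OddHom
variable (n : ℕ)

abbrev XO (n : ℕ) := RWord (ZMod 2) (ZMod n)

/-- half of `n+1` in `ZMod n`. -/
def hO : ZMod n := ((n + 1) / 2 : ℕ)

def faO : Equiv.Perm (XO n) := pushR (hO n) * pushL 1
def fbO : Equiv.Perm (XO n) := pushL 1 * pushR (hO n)

variable {n}

theorem hO_add (m : ℕ) (hm : n = 2 * m + 1) : hO n + hO n = 1 := by
  unfold hO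
  have h1 : (n + 1) / 2 + (n + 1) / 2 = n + 1 := by omega
  rw [← Nat.cast_add, h1]
  push_cast
  rw [ZMod.natCast_self]
  ring

theorem m_hO (m : ℕ) (hm : n = 2 * m + 1) : ((m : ZMod n) + hO n) = 0 := by
  unfold hO
  have h1 : m + (n + 1) / 2 = n := by omega
  rw [← Nat.cast_add, h1, ZMod.natCast_self]

theorem pushL_one_sq : (pushL 1 * pushL 1 : Equiv.Perm (XO n)) = 1 := by
  rw [pushL_mul, show (1 : ZMod 2) + 1 = 0 from by decide, pushL_zero]

theorem pushL_one_inv : (pushL 1 : Equiv.Perm (XO n))⁻¹ = pushL 1 :=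
  inv_eq_of_mul_eq_one_right pushL_one_sq

theorem faO_fbO (m : ℕ) (hm : n = 2 * m + 1) : faO n * fbO n = pushR 1 := by
  unfold faO fbO
  have h1 : (pushR (hO n) * pushL 1 * (pushL 1 * pushR (hO n)) : Equiv.Perm (XO n)) =
      pushR (hO n) * (pushL 1 * pushL 1) * pushR (hO n) := by group
  rw [h1, pushL_one_sq, mul_one, pushR_mul, hO_add m hm]

theorem fbO_faO (m : ℕ) (hm : n = 2 * m + 1) :
    fbO n * faO n = pushL 1 * pushR 1 * pushL 1 := by
  unfold faO fbO
  have h1 : (pushL 1 * pushR (hO n) * (pushR (hO n) * pushL 1) : Equiv.Perm (XO n)) =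
      pushL 1 * (pushR (hO n) * pushR (hO n)) * pushL 1 := by group
  rw [h1, pushR_mul, hO_add m hm]

theorem fbOfaO_pow (m : ℕ) (hm : n = 2 * m + 1) (k : ℕ) :
    (fbO n * faO n) ^ k = pushL 1 * pushR (k : ZMod n) * pushL 1 := by
  rw [fbO_faO m hm]
  have hc := conj_pow'' (pushL 1 : Equiv.Perm (XO n)) (pushR 1) k
  rw [pushL_one_inv] at hc
  rw [hc, pushR_pow]
  congr 2
  rw [nsmul_eq_mul, mul_one]

theorem faOfbO_pow (m : ℕ) (hm : n = 2 * m + 1) (k : ℕ) :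
    (faO n * fbO n) ^ k = pushR (k : ZMod n) := by
  rw [faO_fbO m hm, pushR_pow, nsmul_eq_mul, mul_one]

theorem relO (m : ℕ) (hm : n = 2 * m + 1) :
    altProd n (faO n) (fbO n) = altProd n (fbO n) (faO n) := by
  subst hm
  set n := 2 * m + 1 with hn
  have hmh : ((m : ZMod n) + hO n) = 0 := m_hO m rfl
  have hL : altProd n (faO n) (fbO n) = pushL 1 := by
    rw [altProd_odd, faOfbO_pow m rfl]
    unfold faO
    have h1 : (pushR (m : ZMod n) * (pushR (hO n) * pushL 1) : Equiv.Perm (XO n)) =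
        (pushR (m : ZMod n) * pushR (hO n)) * pushL 1 := by group
    rw [h1, pushR_mul, hmh, pushR_zero, one_mul]
  have hR : altProd n (fbO n) (faO n) = pushL 1 := by
    rw [altProd_odd, fbOfaO_pow m rfl]
    unfold fbO
    have h1 : (pushL 1 * pushR (m : ZMod n) * pushL 1 * (pushL 1 * pushR (hO n)) :
        Equiv.Perm (XO n)) =
        pushL 1 * pushR (m : ZMod n) * (pushL 1 * pushL 1) * pushR (hO n) := by group
    rw [h1, pushL_one_sq, mul_one, mul_assoc, pushR_mul, hmh, pushR_zero, mul_one]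
  rw [hL, hR]

/-- The invariant homomorphism for odd `n`. -/
def muO (m : ℕ) (hm : n = 2 * m + 1) : DihedralArtinGroup n →* Equiv.Perm (XO n) :=
  mkDA n (faO n) (fbO n) (relO m hm)

theorem muO_S_T_even (m : ℕ) (hm : n = 2 * m + 1) (k : ℕ) :
    muO m hm (S n true (2 * k)) = pushR (k : ZMod n) := by
  unfold muO
  rw [mkDA_S_even]
  exact faOfbO_pow m hm k

theorem muO_S_T_odd (m : ℕ) (hm : n = 2 * m + 1) (k : ℕ) :
    muO m hm (S n true (2 * k + 1)) = pushR ((k : ZMod n) + hO n) * pushL 1 := by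
  unfold muO
  rw [mkDA_S_odd]
  show (faO n * fbO n) ^ k * faO n = _
  rw [faOfbO_pow m hm]
  unfold faO
  rw [← mul_assoc, pushR_mul]

theorem muO_S_F_even (m : ℕ) (hm : n = 2 * m + 1) (k : ℕ) :
    muO m hm (S n false (2 * k)) = pushL 1 * pushR (k : ZMod n) * pushL 1 := by
  unfold muO
  rw [mkDA_S_even]
  exact fbOfaO_pow m hm k

theorem muO_S_F_odd (m : ℕ) (hm : n = 2 * m + 1) (k : ℕ) :
    muO m hm (S n false (2 * k + 1)) = pushL 1 * pushR ((k : ZMod n) + hO n) := by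
  unfold muO
  rw [mkDA_S_odd]
  show (fbO n * faO n) ^ k * fbO n = _
  rw [fbOfaO_pow m hm]
  unfold fbO
  have h1 : (pushL 1 * pushR (k : ZMod n) * pushL 1 * (pushL 1 * pushR (hO n)) :
      Equiv.Perm (XO n)) =
      pushL 1 * pushR (k : ZMod n) * (pushL 1 * pushL 1) * pushR (hO n) := by group
  rw [h1, pushL_one_sq, mul_one, mul_assoc, pushR_mul]

end OddHom

/-! ### the even reduced-word invariant -/

section EvenHom
variable (n : ℕ)

abbrev XE (n : ℕ) := RWord ℤ (ZMod n)

def faE : Equiv.Perm (XE n) := pushL (1 : ℤ)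
def fbE : Equiv.Perm (XE n) := pushL (-1 : ℤ) * pushR (2 : ZMod n)

variable {n}

theorem pushLE_inv : (pushL (-1 : ℤ) : Equiv.Perm (XE n))⁻¹ = pushL 1 := by
  apply inv_eq_of_mul_eq_one_right
  rw [pushL_mul, show (-1 : ℤ) + 1 = 0 from by ring, pushL_zero]

theorem faE_fbE : faE n * fbE n = pushR (2 : ZMod n) := by
  unfold faE fbE
  rw [← mul_assoc, pushL_mul, show (1 : ℤ) + -1 = 0 from by ring, pushL_zero, one_mul]

theorem fbE_faE : fbE n * faE n = pushL (-1) * pushR (2 : ZMod n) * (pushL (-1))⁻¹ := by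
  unfold faE fbE
  rw [pushLE_inv, mul_assoc]

theorem faEfbE_pow (k : ℕ) :
    ((faE n * fbE n) ^ k : Equiv.Perm (XE n)) = pushR ((2 * k : ℕ) : ZMod n) := by
  rw [faE_fbE, pushR_pow]
  congr 1
  rw [nsmul_eq_mul]
  push_cast
  ring

theorem fbEfaE_pow (k : ℕ) :
    ((fbE n * faE n) ^ k : Equiv.Perm (XE n)) =
      pushL (-1) * pushR ((2 * k : ℕ) : ZMod n) * pushL 1 := by
  rw [fbE_faE, conj_pow'', pushR_pow, pushLE_inv]
  congr 2
  rw [nsmul_eq_mul]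
  push_cast
  ring

theorem relE (m : ℕ) (hm : n = 2 * m) :
    altProd n (faE n) (fbE n) = altProd n (fbE n) (faE n) := by
  subst hm
  set n := 2 * m with hn
  have h2m : (((2 * m : ℕ) : ZMod n)) = 0 := by rw [hn, ZMod.natCast_self]
  have hL : altProd n (faE n) (fbE n) = 1 := by
    rw [altProd_even, faEfbE_pow, h2m, pushR_zero]
  have hR : altProd n (fbE n) (faE n) = 1 := by
    rw [altProd_even, fbEfaE_pow, h2m, pushR_zero, mul_one]
    rw [pushL_mul, show (-1 : ℤ) + 1 = 0 from by ring, pushL_zero]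
  rw [hL, hR]

/-- The invariant homomorphism for even `n`. -/
def muE (m : ℕ) (hm : n = 2 * m) : DihedralArtinGroup n →* Equiv.Perm (XE n) :=
  mkDA n (faE n) (fbE n) (relE m hm)

theorem muE_S_T_even (m : ℕ) (hm : n = 2 * m) (k : ℕ) :
    muE m hm (S n true (2 * k)) = pushR ((2 * k : ℕ) : ZMod n) := by
  unfold muE
  rw [mkDA_S_even]
  exact faEfbE_pow k

theorem muE_S_T_odd (m : ℕ) (hm : n = 2 * m) (k : ℕ) :
    muE m hm (S n true (2 * k + 1)) = pushR ((2 * k : ℕ) : ZMod n) * pushL 1 := by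
  unfold muE
  rw [mkDA_S_odd]
  show (faE n * fbE n) ^ k * faE n = _
  rw [faEfbE_pow]
  rfl

theorem muE_S_F_even (m : ℕ) (hm : n = 2 * m) (k : ℕ) :
    muE m hm (S n false (2 * k)) = pushL (-1) * pushR ((2 * k : ℕ) : ZMod n) * pushL 1 := by
  unfold muE
  rw [mkDA_S_even]
  exact fbEfaE_pow k

theorem muE_S_F_odd (m : ℕ) (hm : n = 2 * m) (k : ℕ) :
    muE m hm (S n false (2 * k + 1)) = pushL (-1) * pushR ((2 * k + 2 : ℕ) : ZMod n) := by
  unfold muE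
  rw [mkDA_S_odd]
  show (fbE n * faE n) ^ k * fbE n = _
  rw [fbEfaE_pow]
  unfold fbE
  have h1 : (pushL (-1) * pushR ((2 * k : ℕ) : ZMod n) * pushL 1 *
      (pushL (-1) * pushR (2 : ZMod n)) : Equiv.Perm (XE n)) =
      pushL (-1) * pushR ((2 * k : ℕ) : ZMod n) * (pushL 1 * pushL (-1)) *
        pushR (2 : ZMod n) := by group
  rw [h1, pushL_mul, show (1 : ℤ) + -1 = 0 from by ring, pushL_zero, mul_one, mul_assoc,
    pushR_mul]
  congr 1
  push_cast
  ring

end EvenHom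

/-! ### evaluation helpers and head classes -/

section Eval
variable {A B : Type*} [AddGroup A] [AddGroup B] [DecidableEq A] [DecidableEq B]

theorem pushR_nil_val {v : B} (hv : v ≠ 0) (l : RWord A B) (hl : l.1 = []) :
    ((pushR v) l).1 = [Sum.inr v] := by
  show pushRf v l.1 = _
  rw [hl]; simp [pushRf, hv]

theorem pushL_nil_val {x : A} (hx : x ≠ 0) (l : RWord A B) (hl : l.1 = []) :
    ((pushL x) l).1 = [Sum.inl x] := by
  show pushLf x l.1 = _
  rw [hl]; simp [pushLf, hx]

theorem pushR_inl_val {v : B} (hv : v ≠ 0) {x : A} {t : List (A ⊕ B)} (l : RWord A B)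
    (hl : l.1 = Sum.inl x :: t) : ((pushR v) l).1 = Sum.inr v :: Sum.inl x :: t := by
  show pushRf v l.1 = _
  rw [hl]; simp [pushRf, hv]

theorem pushL_inr_val {x : A} (hx : x ≠ 0) {v : B} {t : List (A ⊕ B)} (l : RWord A B)
    (hl : l.1 = Sum.inr v :: t) : ((pushL x) l).1 = Sum.inl x :: Sum.inr v :: t := by
  show pushLf x l.1 = _
  rw [hl]; simp [pushLf, hx]

theorem pushL_inl_val {x y : A} (hxy : x + y ≠ 0) {t : List (A ⊕ B)} (l : RWord A B)
    (hl : l.1 = Sum.inl y :: t) : ((pushL x) l).1 = Sum.inl (x + y) :: t := by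
  show pushLf x l.1 = _
  rw [hl]; simp [pushLf, hxy]

theorem pushR_zero_val (l : RWord A B) : ((pushR (0 : B)) l).1 = l.1 := by
  show pushRf 0 l.1 = _
  exact pushRf_zero l.2

end Eval

section Cast
theorem natCast_nz {n j : ℕ} (h1 : 0 < j) (h2 : j < n) : ((j : ℕ) : ZMod n) ≠ 0 := by
  intro h
  rw [ZMod.natCast_eq_zero_iff] at h
  exact absurd (Nat.le_of_dvd h1 h) (by omega)

theorem lst_odd (γ : Bool) (k : ℕ) : lst γ (2 * k + 1) = γ := by
  unfold lst
  simp [nxt_even]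

theorem lst_even (γ : Bool) {k : ℕ} (hk : 1 ≤ k) : lst γ (2 * k) = !γ := by
  unfold lst
  obtain ⟨j, rfl⟩ : ∃ j, k = j + 1 := ⟨k - 1, by omega⟩
  have : 2 * (j + 1) - 1 = 2 * j + 1 := by omega
  rw [this, nxt_odd]
end Cast

/-! ### head classes : odd case -/

section ClsO
variable {n : ℕ}

def clsO (γ : Bool) (l : List (ZMod 2 ⊕ ZMod n)) : Prop :=
  if γ then ∃ v t, l = Sum.inr v :: t ∧ v ≠ 0
  else ∃ t, l = Sum.inl 1 :: t

theorem clsO_disjoint {l : List (ZMod 2 ⊕ ZMod n)} (h1 : clsO true l) (h2 : clsO false l) :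
    False := by
  obtain ⟨v, t, rfl, -⟩ := h1
  obtain ⟨t', ht'⟩ := h2
  simp at ht'

/-- `hO` as a natural number cast. -/
theorem hO_cast (m : ℕ) (hm : n = 2 * m + 1) : hO n = ((m + 1 : ℕ) : ZMod n) := by
  unfold hO
  congr 1
  omega

theorem odd_val_nz (m : ℕ) (hm : n = 2 * m + 1) {k : ℕ} (hk : 2 * k + 1 ≤ n - 1) :
    ((k : ZMod n) + hO n) ≠ 0 := by
  rw [hO_cast m hm, ← Nat.cast_add]
  exact natCast_nz (by omega) (by omega)

theorem even_val_nz (m : ℕ) (hm : n = 2 * m + 1) {k : ℕ} (hk1 : 1 ≤ k) (hk : 2 * k ≤ n - 1) :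
    ((k : ℕ) : ZMod n) ≠ 0 :=
  natCast_nz (by omega) (by omega)

theorem one_nz : (1 : ZMod 2) ≠ 0 := by decide

/-- Base case: the normal form of a single proper simple starts with its first letter's class. -/
theorem baseO (m : ℕ) (hm : n = 2 * m + 1) (γ : Bool) (K : ℕ) (hK1 : 1 ≤ K)
    (hK2 : K ≤ n - 1) (l : XO n) (hl : l.1 = []) :
    clsO γ ((muO m hm (S n γ K)) l).1 := by
  have hn2 : 2 ≤ n := by omega
  rcases Nat.even_or_odd K with ⟨k, hk⟩ | ⟨k, hk⟩
  · have hK : K = 2 * k := by omega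
    subst hK
    have hknz : ((k : ℕ) : ZMod n) ≠ 0 := even_val_nz m hm (by omega) hK2
    cases γ
    · rw [muO_S_F_even m hm k]
      simp only [Equiv.Perm.mul_apply]
      have e1 := pushL_nil_val one_nz l hl
      have e2 := pushR_inl_val hknz _ e1
      have e3 := pushL_inr_val one_nz _ e2
      rw [clsO]
      exact ⟨_, e3⟩
    · rw [muO_S_T_even m hm k]
      rw [clsO]
      exact ⟨k, [], pushR_nil_val hknz l hl, hknz⟩
  · have hK : K = 2 * k + 1 := by omega
    subst hK
    have hnz : ((k : ZMod n) + hO n) ≠ 0 := odd_val_nz m hm hK2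
    cases γ
    · rw [muO_S_F_odd m hm k]
      simp only [Equiv.Perm.mul_apply]
      have e1 := pushR_nil_val hnz l hl
      have e2 := pushL_inr_val one_nz _ e1
      rw [clsO]
      exact ⟨_, e2⟩
    · rw [muO_S_T_odd m hm k]
      simp only [Equiv.Perm.mul_apply]
      have e1 := pushL_nil_val one_nz l hl
      have e2 := pushR_inl_val hnz _ e1
      rw [clsO]
      exact ⟨_, _, e2, hnz⟩

/-- Step: applying a proper simple with a bad junction preserves the head class. -/
theorem stepO (m : ℕ) (hm : n = 2 * m + 1) (γ : Bool) (K : ℕ) (hK1 : 1 ≤ K)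
    (hK2 : K ≤ n - 1) (l : XO n) (hl : clsO (lst γ K) l.1) :
    clsO γ ((muO m hm (S n γ K)) l).1 := by
  rcases Nat.even_or_odd K with ⟨k, hk⟩ | ⟨k, hk⟩
  · have hK : K = 2 * k := by omega
    subst hK
    have hk1 : 1 ≤ k := by omega
    have hknz : ((k : ℕ) : ZMod n) ≠ 0 := even_val_nz m hm hk1 hK2
    rw [lst_even _ hk1] at hl
    cases γ
    · -- γ = false, lst = true : l starts with inr
      rw [show (!false) = true from rfl] at hl
      obtain ⟨v, t, hlv, -⟩ := hl
      rw [muO_S_F_even m hm k]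
      simp only [Equiv.Perm.mul_apply]
      have e1 := pushL_inr_val one_nz l hlv
      have e2 := pushR_inl_val hknz _ e1
      have e3 := pushL_inr_val one_nz _ e2
      rw [clsO]
      exact ⟨_, e3⟩
    · -- γ = true, lst = false : l starts with inl 1
      rw [show (!true) = false from rfl] at hl
      obtain ⟨t, hlv⟩ := hl
      rw [muO_S_T_even m hm k]
      rw [clsO]
      exact ⟨_, _, pushR_inl_val hknz l hlv, hknz⟩
  · have hK : K = 2 * k + 1 := by omega
    subst hK
    have hnz : ((k : ZMod n) + hO n) ≠ 0 := odd_val_nz m hm hK2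
    rw [lst_odd] at hl
    cases γ
    · -- γ = false : l starts with inl 1
      obtain ⟨t, hlv⟩ := hl
      rw [muO_S_F_odd m hm k]
      simp only [Equiv.Perm.mul_apply]
      have e1 := pushR_inl_val hnz l hlv
      have e2 := pushL_inr_val one_nz _ e1
      rw [clsO]
      exact ⟨_, e2⟩
    · -- γ = true : l starts with inr
      obtain ⟨v, t, hlv, -⟩ := hl
      rw [muO_S_T_odd m hm k]
      simp only [Equiv.Perm.mul_apply]
      have e1 := pushL_inr_val one_nz l hlv
      have e2 := pushR_inl_val hnz _ e1
      rw [clsO]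
      exact ⟨_, _, e2, hnz⟩

end ClsO

/-! ### head classes : even case -/

section ClsE
variable {n : ℕ}

def clsE (γ : Bool) (l : List (ℤ ⊕ ZMod n)) : Prop :=
  if γ then (∃ v t, l = Sum.inr v :: t) ∨ (∃ v : ℤ, ∃ t, l = Sum.inl v :: t ∧ 0 < v)
  else ∃ v : ℤ, ∃ t, l = Sum.inl v :: t ∧ v < 0

theorem clsE_disjoint {l : List (ℤ ⊕ ZMod n)} (h1 : clsE true l) (h2 : clsE false l) :
    False := by
  obtain ⟨v, t, hvt, hv⟩ := h2
  rcases h1 with ⟨w, t', hwt⟩ | ⟨w, t', hwt, hw⟩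
  · rw [hvt] at hwt; simp at hwt
  · rw [hvt] at hwt
    simp only [List.cons.injEq, Sum.inl.injEq] at hwt
    omega

theorem even_val_nzE (m : ℕ) (hm : n = 2 * m) {k : ℕ} (hk1 : 1 ≤ k) (hk : 2 * k ≤ n - 1) :
    ((2 * k : ℕ) : ZMod n) ≠ 0 :=
  natCast_nz (by omega) (by omega)

theorem baseE (m : ℕ) (hm : n = 2 * m) (γ : Bool) (K : ℕ) (hK1 : 1 ≤ K)
    (hK2 : K ≤ n - 1) (l : XE n) (hl : l.1 = []) :
    clsE γ ((muE m hm (S n γ K)) l).1 := by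
  rcases Nat.even_or_odd K with ⟨k, hk⟩ | ⟨k, hk⟩
  · have hK : K = 2 * k := by omega
    subst hK
    have hk1 : 1 ≤ k := by omega
    have hknz : ((2 * k : ℕ) : ZMod n) ≠ 0 := even_val_nzE m hm hk1 hK2
    cases γ
    · rw [muE_S_F_even m hm k]
      simp only [Equiv.Perm.mul_apply]
      have e1 := pushL_nil_val (show (1:ℤ) ≠ 0 by norm_num) l hl
      have e2 := pushR_inl_val hknz _ e1
      have e3 := pushL_inr_val (show (-1:ℤ) ≠ 0 by norm_num) _ e2
      rw [clsE]
      exact ⟨_, _, e3, by norm_num⟩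
    · rw [muE_S_T_even m hm k]
      rw [clsE]
      exact Or.inl ⟨_, _, pushR_nil_val hknz l hl⟩
  · have hK : K = 2 * k + 1 := by omega
    subst hK
    cases γ
    · -- S F (2k+1) ↦ pushL (-1) ∘ pushR (2k+2)
      rw [muE_S_F_odd m hm k]
      simp only [Equiv.Perm.mul_apply]
      by_cases hdeg : ((2 * k + 2 : ℕ) : ZMod n) = 0
      · have e1 : ((pushR ((2 * k + 2 : ℕ) : ZMod n)) l).1 = [] := by
          rw [hdeg, pushR_zero_val, hl]
        have e2 := pushL_nil_val (show (-1:ℤ) ≠ 0 by norm_num) _ e1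
        rw [clsE]
        exact ⟨_, _, e2, by norm_num⟩
      · have e1 := pushR_nil_val hdeg l hl
        have e2 := pushL_inr_val (show (-1:ℤ) ≠ 0 by norm_num) _ e1
        rw [clsE]
        exact ⟨_, _, e2, by norm_num⟩
    · rw [muE_S_T_odd m hm k]
      simp only [Equiv.Perm.mul_apply]
      have e1 := pushL_nil_val (show (1:ℤ) ≠ 0 by norm_num) l hl
      by_cases hdeg : ((2 * k : ℕ) : ZMod n) = 0
      · have e2 : ((pushR ((2 * k : ℕ) : ZMod n)) ((pushL (1:ℤ)) l)).1 = [Sum.inl 1] := by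
          rw [hdeg, pushR_zero_val, e1]
        rw [clsE]
        exact Or.inr ⟨_, _, e2, by norm_num⟩
      · have e2 := pushR_inl_val hdeg _ e1
        rw [clsE]
        exact Or.inl ⟨_, _, e2⟩

theorem stepE (m : ℕ) (hm : n = 2 * m) (γ : Bool) (K : ℕ) (hK1 : 1 ≤ K)
    (hK2 : K ≤ n - 1) (l : XE n) (hl : clsE (lst γ K) l.1) :
    clsE γ ((muE m hm (S n γ K)) l).1 := by
  rcases Nat.even_or_odd K with ⟨k, hk⟩ | ⟨k, hk⟩
  · have hK : K = 2 * k := by omega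
    subst hK
    have hk1 : 1 ≤ k := by omega
    have hknz : ((2 * k : ℕ) : ZMod n) ≠ 0 := even_val_nzE m hm hk1 hK2
    rw [lst_even _ hk1] at hl
    cases γ
    · -- γ = false, lst = true : l in clsE true
      rw [show (!false) = true from rfl] at hl
      rw [muE_S_F_even m hm k]
      simp only [Equiv.Perm.mul_apply]
      rcases hl with ⟨v, t, hlv⟩ | ⟨v, t, hlv, hv⟩
      · have e1 := pushL_inr_val (show (1:ℤ) ≠ 0 by norm_num) l hlv
        have e2 := pushR_inl_val hknz _ e1
        have e3 := pushL_inr_val (show (-1:ℤ) ≠ 0 by norm_num) _ e2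
        rw [clsE]
        exact ⟨_, _, e3, by norm_num⟩
      · have e1 := pushL_inl_val (show (1:ℤ) + v ≠ 0 by omega) l hlv
        have e2 := pushR_inl_val hknz _ e1
        have e3 := pushL_inr_val (show (-1:ℤ) ≠ 0 by norm_num) _ e2
        rw [clsE]
        exact ⟨_, _, e3, by norm_num⟩
    · -- γ = true, lst = false : l in clsE false
      rw [show (!true) = false from rfl] at hl
      obtain ⟨v, t, hlv, hv⟩ := hl
      rw [muE_S_T_even m hm k]
      rw [clsE]
      exact Or.inl ⟨_, _, pushR_inl_val hknz l hlv⟩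
  · have hK : K = 2 * k + 1 := by omega
    subst hK
    rw [lst_odd] at hl
    cases γ
    · -- γ = false : l in clsE false
      obtain ⟨v, t, hlv, hv⟩ := hl
      rw [muE_S_F_odd m hm k]
      simp only [Equiv.Perm.mul_apply]
      by_cases hdeg : ((2 * k + 2 : ℕ) : ZMod n) = 0
      · have e1 : ((pushR ((2 * k + 2 : ℕ) : ZMod n)) l).1 = Sum.inl v :: t := by
          rw [hdeg, pushR_zero_val, hlv]
        have e2 := pushL_inl_val (show (-1:ℤ) + v ≠ 0 by omega) _ e1
        rw [clsE]
        exact ⟨_, _, e2, by omega⟩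
      · have e1 := pushR_inl_val hdeg l hlv
        have e2 := pushL_inr_val (show (-1:ℤ) ≠ 0 by norm_num) _ e1
        rw [clsE]
        exact ⟨_, _, e2, by norm_num⟩
    · -- γ = true : l in clsE true
      rw [muE_S_T_odd m hm k]
      simp only [Equiv.Perm.mul_apply]
      rcases hl with ⟨v, t, hlv⟩ | ⟨v, t, hlv, hv⟩
      · have e1 := pushL_inr_val (show (1:ℤ) ≠ 0 by norm_num) l hlv
        by_cases hdeg : ((2 * k : ℕ) : ZMod n) = 0
        · have e2 : ((pushR ((2 * k : ℕ) : ZMod n)) ((pushL (1:ℤ)) l)).1 =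
              Sum.inl 1 :: Sum.inr v :: t := by rw [hdeg, pushR_zero_val, e1]
          rw [clsE]
          exact Or.inr ⟨_, _, e2, by norm_num⟩
        · have e2 := pushR_inl_val hdeg _ e1
          rw [clsE]
          exact Or.inl ⟨_, _, e2⟩
      · have e1 := pushL_inl_val (show (1:ℤ) + v ≠ 0 by omega) l hlv
        by_cases hdeg : ((2 * k : ℕ) : ZMod n) = 0
        · have e2 : ((pushR ((2 * k : ℕ) : ZMod n)) ((pushL (1:ℤ)) l)).1 =
              Sum.inl (1 + v) :: t := by rw [hdeg, pushR_zero_val, e1]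
          rw [clsE]
          exact Or.inr ⟨_, _, e2, by omega⟩
        · have e2 := pushR_inl_val hdeg _ e1
          rw [clsE]
          exact Or.inl ⟨_, _, e2⟩

end ClsE

/-! ### the four refutation lemmas -/

section Refute
variable {n : ℕ}

def e0O (n : ℕ) : XO n := ⟨[], red_nil⟩
def e0E (n : ℕ) : XE n := ⟨[], red_nil⟩

theorem clsO_flip_contra {γ : Bool} {l : List (ZMod 2 ⊕ ZMod n)}
    (h1 : clsO γ l) (h2 : clsO (!γ) l) : False := by
  cases γ
  · exact clsO_disjoint h2 h1
  · exact clsO_disjoint h1 h2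

theorem clsE_flip_contra {γ : Bool} {l : List (ℤ ⊕ ZMod n)}
    (h1 : clsE γ l) (h2 : clsE (!γ) l) : False := by
  cases γ
  · exact clsE_disjoint h2 h1
  · exact clsE_disjoint h1 h2

/-- R1 : distinct starting letters give distinct proper simples. -/
theorem R1 (hn : 2 ≤ n) (γ : Bool) (M : ℕ) (h1 : 1 ≤ M) (h2 : M ≤ n - 1) :
    S n γ M ≠ S n (!γ) M := by
  intro h
  rcases Nat.even_or_odd n with ⟨m, hmn⟩ | ⟨m, hmn⟩
  · have hm : n = 2 * m := by omega
    have hL := baseE m hm γ M h1 h2 (e0E n) rfl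
    have hR := baseE m hm (!γ) M h1 h2 (e0E n) rfl
    rw [h] at hL
    exact clsE_flip_contra hL hR
  · have hm : n = 2 * m + 1 := by omega
    have hL := baseO m hm γ M h1 h2 (e0O n) rfl
    have hR := baseO m hm (!γ) M h1 h2 (e0O n) rfl
    rw [h] at hL
    exact clsO_flip_contra hL hR

theorem chainO (m : ℕ) (hm : n = 2 * m + 1) (γ : Bool) (K I : ℕ)
    (hK1 : 1 ≤ K) (hK2 : K ≤ n - 1) (hI1 : 1 ≤ I) (hI2 : I ≤ n - 1) :
    clsO γ ((muO m hm (S n γ K * S n (lst γ K) I)) (e0O n)).1 := by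
  rw [map_mul, Equiv.Perm.mul_apply]
  exact stepO m hm γ K hK1 hK2 _ (baseO m hm (lst γ K) I hI1 hI2 (e0O n) rfl)

theorem chainE (m : ℕ) (hm : n = 2 * m) (γ : Bool) (K I : ℕ)
    (hK1 : 1 ≤ K) (hK2 : K ≤ n - 1) (hI1 : 1 ≤ I) (hI2 : I ≤ n - 1) :
    clsE γ ((muE m hm (S n γ K * S n (lst γ K) I)) (e0E n)).1 := by
  rw [map_mul, Equiv.Perm.mul_apply]
  exact stepE m hm γ K hK1 hK2 _ (baseE m hm (lst γ K) I hI1 hI2 (e0E n) rfl)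

/-- R3 : two bad 2-chains with opposite starting letters are distinct. -/
theorem R3 (hn : 2 ≤ n) (γ : Bool) (K I K' I' : ℕ)
    (hK1 : 1 ≤ K) (hK2 : K ≤ n - 1) (hI1 : 1 ≤ I) (hI2 : I ≤ n - 1)
    (hK1' : 1 ≤ K') (hK2' : K' ≤ n - 1) (hI1' : 1 ≤ I') (hI2' : I' ≤ n - 1) :
    S n γ K * S n (lst γ K) I ≠ S n (!γ) K' * S n (lst (!γ) K') I' := by
  intro h
  rcases Nat.even_or_odd n with ⟨m, hmn⟩ | ⟨m, hmn⟩
  · have hm : n = 2 * m := by omega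
    have hL := chainE m hm γ K I hK1 hK2 hI1 hI2
    have hR := chainE m hm (!γ) K' I' hK1' hK2' hI1' hI2'
    rw [h] at hL
    exact clsE_flip_contra hL hR
  · have hm : n = 2 * m + 1 := by omega
    have hL := chainO m hm γ K I hK1 hK2 hI1 hI2
    have hR := chainO m hm (!γ) K' I' hK1' hK2' hI1' hI2'
    rw [h] at hL
    exact clsO_flip_contra hL hR

/-- R2 : a bad 2-chain is never equal to a single simple. -/
theorem R2 (hn : 2 ≤ n) (γ γ' : Bool) (K I : ℕ)
    (hK1 : 1 ≤ K) (hK2 : K ≤ n - 1) (hI1 : 1 ≤ I) (hsum : K + I ≤ n) :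
    S n γ K * S n (lst γ K) I ≠ S n γ' (K + I) := by
  intro h
  have hI2 : I ≤ n - 1 := by omega
  have hlst : lst γ K = !(nxt γ K) := lst_eq_not_nxt γ hK1
  by_cases hgg : γ' = γ ∨ K + I = n
  · -- reduce to R1 by cancellation
    have hR : S n γ' (K + I) = S n γ K * S n (nxt γ K) I := by
      rcases hgg with rfl | hL
      · rw [← S_mul]
      · rw [hL, S_top, ← S_top n γ, ← hL, ← S_mul]
    rw [hR] at h
    have hc : S n (lst γ K) I = S n (nxt γ K) I := mul_left_cancel h
    rw [hlst] at hc
    exact R1 hn (!(nxt γ K)) I hI1 hI2 (by rw [Bool.not_not]; exact hc)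
  · push_neg at hgg
    obtain ⟨hγ', hLn⟩ := hgg
    have hγ'2 : γ' = !γ := by
      cases γ <;> cases γ' <;> simp_all
    subst hγ'2
    have hL2 : K + I ≤ n - 1 := by omega
    rcases Nat.even_or_odd n with ⟨m, hmn⟩ | ⟨m, hmn⟩
    · have hm : n = 2 * m := by omega
      have hL := chainE m hm γ K I hK1 hK2 hI1 hI2
      have hR := baseE m hm (!γ) (K + I) (by omega) hL2 (e0E n) rfl
      rw [h] at hL
      exact clsE_flip_contra hL hR
    · have hm : n = 2 * m + 1 := by omega
      have hL := chainO m hm γ K I hK1 hK2 hI1 hI2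
      have hR := baseO m hm (!γ) (K + I) (by omega) hL2 (e0O n) rfl
      rw [h] at hL
      exact clsO_flip_contra hL hR

/-- R6 : a bad 3-chain is never equal to a single simple. -/
theorem R6 (hn : 2 ≤ n) (r γ' : Bool) (K1 K2 K3 : ℕ)
    (h11 : 1 ≤ K1) (h21 : 1 ≤ K2) (h31 : 1 ≤ K3) (hsum : K1 + K2 + K3 ≤ n) :
    S n r K1 * S n (lst r K1) K2 * S n (lst (lst r K1) K2) K3 ≠ S n γ' (K1 + K2 + K3) := by
  intro h
  have hK12 : K1 ≤ n - 1 := by omega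
  have hK22 : K2 ≤ n - 1 := by omega
  have hK32 : K3 ≤ n - 1 := by omega
  by_cases hgg : γ' = r ∨ K1 + K2 + K3 = n
  · -- cancel the first simple, reduce to R2
    have hR : S n γ' (K1 + K2 + K3) = S n r K1 * S n (nxt r K1) (K2 + K3) := by
      rcases hgg with rfl | hL
      · rw [← S_mul]
        congr 1
        omega
      · rw [hL, S_top, ← S_top n r, ← hL, ← S_mul]
        congr 1
        omega
    rw [hR, mul_assoc] at h
    have hc : S n (lst r K1) K2 * S n (lst (lst r K1) K2) K3 = S n (nxt r K1) (K2 + K3) :=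
      mul_left_cancel h
    exact R2 hn (lst r K1) (nxt r K1) K2 K3 h21 hK22 h31 (by omega) hc
  · push_neg at hgg
    obtain ⟨hγ', hLn⟩ := hgg
    have hγ'2 : γ' = !r := by
      cases r <;> cases γ' <;> simp_all
    subst hγ'2
    have hL2 : K1 + K2 + K3 ≤ n - 1 := by omega
    rcases Nat.even_or_odd n with ⟨m, hmn⟩ | ⟨m, hmn⟩
    · have hm : n = 2 * m := by omega
      have hL : clsE r ((muE m hm
          (S n r K1 * S n (lst r K1) K2 * S n (lst (lst r K1) K2) K3)) (e0E n)).1 := by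
        rw [mul_assoc, map_mul, Equiv.Perm.mul_apply]
        refine stepE m hm r K1 h11 hK12 _ ?_
        exact chainE m hm (lst r K1) K2 K3 h21 hK22 h31 hK32
      have hR := baseE m hm (!r) (K1 + K2 + K3) (by omega) hL2 (e0E n) rfl
      rw [h] at hL
      exact clsE_flip_contra hL hR
    · have hm : n = 2 * m + 1 := by omega
      have hL : clsO r ((muO m hm
          (S n r K1 * S n (lst r K1) K2 * S n (lst (lst r K1) K2) K3)) (e0O n)).1 := by
        rw [mul_assoc, map_mul, Equiv.Perm.mul_apply]
        refine stepO m hm r K1 h11 hK12 _ ?_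
        exact chainO m hm (lst r K1) K2 K3 h21 hK22 h31 hK32
      have hR := baseO m hm (!r) (K1 + K2 + K3) (by omega) hL2 (e0O n) rfl
      rw [h] at hL
      exact clsO_flip_contra hL hR

end Refute

/-! ### membership characterizations and stripping -/

section Mem
variable {n : ℕ}

theorem altList_TF : altList n true false = W true n := rfl
theorem altList_FT : altList n false true = W false n := rfl

theorem mem_verts {g z : DihedralArtinGroup n} :
    z ∈ precellVerts n g ↔ ∃ γ i, i ≤ n ∧ z = g * S n γ i := by
  constructor
  · rintro ⟨p, hp | hp, rfl⟩
    · rw [altList_TF] at hp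
      obtain ⟨i, hi, rfl⟩ := prefix_W hp
      exact ⟨true, i, hi, rfl⟩
    · rw [altList_FT] at hp
      obtain ⟨i, hi, rfl⟩ := prefix_W hp
      exact ⟨false, i, hi, rfl⟩
  · rintro ⟨γ, i, hi, rfl⟩
    refine ⟨W γ i, ?_, rfl⟩
    have hpre : W γ i <+: W γ n := by
      refine ⟨W (nxt γ i) (n - i), ?_⟩
      rw [← W_append]
      congr 1
      omega
    cases γ
    · exact Or.inr hpre
    · exact Or.inl hpre

theorem mem_edges {g : DihedralArtinGroup n} {e : DihedralArtinGroup n × Bool}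
    (hn : 1 ≤ n) (he : e ∈ precellEdges n g) :
    ∃ γ i, i ≤ n - 1 ∧ e = (g * S n γ i, nxt γ i) := by
  obtain ⟨p, s, hp | hp, rfl⟩ := he
  · rw [altList_TF] at hp
    obtain ⟨j, hj, hjw⟩ := prefix_W hp.2
    have hlen : j = p.length + 1 := by
      have := congrArg List.length hjw
      simp [W_length] at this
      omega
    obtain ⟨i, rfl⟩ : ∃ i, j = i + 1 := ⟨p.length, hlen⟩
    rw [W_snoc] at hjw
    have hps : p = W true i ∧ s = nxt true i := by
      have hl : p.length = (W true i).length := by rw [W_length]; omega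
      obtain ⟨h1, h2⟩ := List.append_inj hjw.symm (by rw [hl])
      constructor
      · exact h1.symm
      · simpa using h2.symm
    refine ⟨true, i, by omega, ?_⟩
    rw [hps.1, hps.2]
    rfl
  · rw [altList_FT] at hp
    obtain ⟨j, hj, hjw⟩ := prefix_W hp.2
    have hlen : j = p.length + 1 := by
      have := congrArg List.length hjw
      simp [W_length] at this
      omega
    obtain ⟨i, rfl⟩ : ∃ i, j = i + 1 := ⟨p.length, hlen⟩
    rw [W_snoc] at hjw
    have hps : p = W false i ∧ s = nxt false i := by
      have hl : p.length = (W false i).length := by rw [W_length]; omega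
      obtain ⟨h1, h2⟩ := List.append_inj hjw.symm (by rw [hl])
      constructor
      · exact h1.symm
      · simpa using h2.symm
    refine ⟨false, i, by omega, ?_⟩
    rw [hps.1, hps.2]
    rfl

theorem ell_S2 (γ δ : Bool) (K I : ℕ) :
    ell n (S n γ K * S n δ I) = Multiplicative.ofAdd ((K + I : ℕ) : ℤ) := by
  rw [map_mul, ell_S, ell_S, ← ofAdd_add]
  congr 1
  all_goals push_cast
  all_goals try ring

theorem len_eq2 {γ δ γ' : Bool} {K I K' : ℕ} (h : S n γ K * S n δ I = S n γ' K') :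
    K + I = K' := by
  have := congrArg (ell n) h
  rw [ell_S2, ell_S] at this
  have h2 : ((K + I : ℕ) : ℤ) = (K' : ℤ) := Multiplicative.ofAdd.injective this
  exact_mod_cast h2

theorem len_eq22 {γ δ γ' δ' : Bool} {K I K' I' : ℕ}
    (h : S n γ K * S n δ I = S n γ' K' * S n δ' I') : K + I = K' + I' := by
  have := congrArg (ell n) h
  rw [ell_S2, ell_S2] at this
  have h2 : ((K + I : ℕ) : ℤ) = ((K' + I' : ℕ) : ℤ) := Multiplicative.ofAdd.injective this
  exact_mod_cast h2

theorem key_strip {g1 g2 : DihedralArtinGroup n} {α β : Bool} {i j : ℕ}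
    (hji : j ≤ i) (heq : g1 * S n α i = g2 * S n β j) (hnx : nxt α i = nxt β j) :
    g2 = g1 * S n α (i - j) ∧ β = nxt α (i - j) := by
  have hij : (i - j) + j = i := by omega
  have hβ : β = nxt α (i - j) := by
    apply nxt_inj (k := j)
    rw [← hnx]
    conv_rhs => rw [← nxt_add]
    rw [hij]
  have hSi : S n α i = S n α (i - j) * S n β j := by
    conv_lhs => rw [← hij]
    rw [S_mul, hβ]
  rw [hSi, ← mul_assoc] at heq
  exact ⟨(mul_right_cancel heq).symm, hβ⟩

theorem edge_strip (hn : 2 ≤ n) {g1 g2 : DihedralArtinGroup n} (hne : g1 ≠ g2)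
    (he : (precellEdges n g1 ∩ precellEdges n g2).Nonempty) :
    ∃ δ d, 1 ≤ d ∧ d ≤ n - 1 ∧ (g2 = g1 * S n δ d ∨ g1 = g2 * S n δ d) := by
  obtain ⟨e, he1, he2⟩ := he
  obtain ⟨α, i, hi, rfl⟩ := mem_edges (by omega) he1
  obtain ⟨β, j, hj, he⟩ := mem_edges (by omega) he2
  have heq : g1 * S n α i = g2 * S n β j := by
    have := congrArg Prod.fst he
    exact this
  have hnx : nxt α i = nxt β j := by
    have := congrArg Prod.snd he
    exact this
  rcases le_or_gt j i with hji | hij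
  · obtain ⟨hg, -⟩ := key_strip hji heq hnx
    refine ⟨α, i - j, ?_, by omega, Or.inl hg⟩
    rcases Nat.eq_zero_or_pos (i - j) with h0 | h1
    · exfalso
      apply hne
      rw [hg, h0]
      simp
    · omega
  · obtain ⟨hg, -⟩ := key_strip (le_of_lt hij) heq.symm hnx.symm
    refine ⟨β, j - i, by omega, by omega, Or.inr hg⟩

/-- Normalize `S p d * S α i` : either it merges into a single simple, or the junction is bad. -/
theorem SN (hn : 2 ≤ n) (p : Bool) (d : ℕ) (hd1 : 1 ≤ d) (α : Bool) (i : ℕ) (hi : i ≤ n) :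
    S n p d * S n α i = S n p (d + i) ∨ (α = lst p d ∧ 1 ≤ i ∧ i ≤ n - 1) := by
  by_cases hi0 : i = 0
  · subst hi0; left; simp
  by_cases hin : i = n
  · left
    rw [hin, S_mul, S_top n (nxt p d), ← S_top n α]
  by_cases hα : α = nxt p d
  · left; rw [S_mul, ← hα]
  · right
    refine ⟨?_, by omega, by omega⟩
    rw [lst_eq_not_nxt p hd1, Bool.eq_not_iff]
    exact hα

end Mem

/-! ### the reversing anti-automorphism -/

section Iota
variable {n : ℕ}

theorem pow_shuffle {G : Type*} [Group G] (a b : G) (j : ℕ) :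
    (a * b) ^ j * a = a * (b * a) ^ j := by
  induction j with
  | zero => simp
  | succ k ih =>
    rw [pow_succ', mul_assoc, ih, pow_succ', ← mul_assoc, ← mul_assoc, mul_assoc a b a]

theorem altProd_inv_odd {G : Type*} [Group G] (j : ℕ) (x y : G) :
    altProd (2 * j + 1) x⁻¹ y⁻¹ = (altProd (2 * j + 1) x y)⁻¹ := by
  rw [altProd_odd, altProd_odd, pow_shuffle x⁻¹ y⁻¹ j, mul_inv_rev, ← inv_pow, mul_inv_rev]

theorem altProd_inv_even {G : Type*} [Group G] (j : ℕ) (x y : G) :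
    altProd (2 * j) x⁻¹ y⁻¹ = (altProd (2 * j) y x)⁻¹ := by
  rw [altProd_even, altProd_even, ← mul_inv_rev, inv_pow]

theorem W_reverse (γ : Bool) (k : ℕ) : (W γ k).reverse = W (lst γ k) k := by
  induction k generalizing γ with
  | zero => rfl
  | succ j ih =>
    rw [W_snoc, List.reverse_append, List.reverse_singleton]
    show nxt γ j :: (W γ j).reverse = W (lst γ (j+1)) (j+1)
    have hl : lst γ (j + 1) = nxt γ j := rfl
    rw [hl, W_succ, ih]
    rcases Nat.eq_zero_or_pos j with rfl | hj
    · rfl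
    · rw [lst_eq_not_nxt γ hj]

theorem iot_rel (n : ℕ) :
    altProd n (daGen n true)⁻¹ (daGen n false)⁻¹ =
      altProd n (daGen n false)⁻¹ (daGen n true)⁻¹ := by
  have hrel := da_rel n
  rcases Nat.even_or_odd n with ⟨m, hmn⟩ | ⟨m, hmn⟩
  · have hm : n = 2 * m := by omega
    rw [hm] at hrel ⊢
    rw [altProd_inv_even, altProd_inv_even, hrel]
  · have hm : n = 2 * m + 1 := by omega
    rw [hm] at hrel ⊢
    rw [altProd_inv_odd, altProd_inv_odd, hrel]

/-- The antiautomorphism-composed-with-inverse of `DA_n` : `a ↦ a⁻¹`, `b ↦ b⁻¹`. -/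
def iot (n : ℕ) : DihedralArtinGroup n →* DihedralArtinGroup n :=
  mkDA n (daGen n true)⁻¹ (daGen n false)⁻¹ (iot_rel n)

theorem iot_gen (s : Bool) : iot n (daGen n s) = (daGen n s)⁻¹ := by
  unfold iot
  rw [mkDA_gen]
  cases s <;> rfl

theorem daWord_cons (x : Bool) (t : List Bool) :
    daWord n (x :: t) = daGen n x * daWord n t := by
  unfold daWord; simp

theorem daWord_singleton (x : Bool) : daWord n [x] = daGen n x := by
  unfold daWord; simp

theorem iot_daWord (l : List Bool) : iot n (daWord n l) = (daWord n l.reverse)⁻¹ := by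
  induction l with
  | nil =>
    show iot n (daWord n []) = (daWord n [])⁻¹
    have h1 : daWord n ([] : List Bool) = 1 := rfl
    rw [h1, map_one, inv_one]
  | cons x t ih =>
    rw [daWord_cons, map_mul, iot_gen, ih, List.reverse_cons, daWord_append,
      daWord_singleton, mul_inv_rev]

theorem iot_S (γ : Bool) (k : ℕ) : iot n (S n γ k) = (S n (lst γ k) k)⁻¹ := by
  unfold S
  rw [iot_daWord, W_reverse]

theorem iot_invol (z : DihedralArtinGroup n) : iot n (iot n z) = z := by
  have hcomp : (iot n).comp (iot n) = MonoidHom.id (DihedralArtinGroup n) := by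
    apply PresentedGroup.ext
    intro s
    show iot n (iot n (daGen n s)) = daGen n s
    rw [iot_gen, map_inv, iot_gen, inv_inv]
  exact DFunLike.congr_fun hcomp z

theorem iot_Delta : iot n (S n true n) = (S n true n)⁻¹ := by
  rw [iot_S]
  congr 1
  exact S_top n _

/-- The inversion symmetry of the precell complex. -/
def phi (n : ℕ) (z : DihedralArtinGroup n) : DihedralArtinGroup n := iot n z * S n true n

theorem phi_phi (z : DihedralArtinGroup n) : phi n (phi n z) = z := by
  unfold phi
  rw [map_mul, iot_invol, iot_Delta]
  group

theorem phi_inj {x y : DihedralArtinGroup n} (h : phi n x = phi n y) : x = y := by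
  rw [← phi_phi x, h, phi_phi]

theorem phi_mem {g z : DihedralArtinGroup n} {γ : Bool} {i : ℕ} (hi : i ≤ n)
    (hz : z = g * S n γ i) :
    ∃ γ' i', i' ≤ n ∧ phi n z = iot n g * S n γ' i' := by
  unfold phi
  rw [hz, map_mul, iot_S, mul_assoc]
  by_cases hi0 : i = 0
  · subst hi0
    refine ⟨true, n, le_rfl, ?_⟩
    simp
  · refine ⟨nxt (lst γ i) i, n - i, by omega, ?_⟩
    congr 1
    have hd := S_delta n (lst γ i) i hi
    have : Dl n = S n true n := rfl
    rw [this] at hd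
    rw [← hd]
    group

theorem phiV {g z : DihedralArtinGroup n} (hz : z ∈ precellVerts n g) :
    phi n z ∈ precellVerts n (iot n g) := by
  obtain ⟨γ, i, hi, hzz⟩ := mem_verts.mp hz
  obtain ⟨γ', i', hi', hp⟩ := phi_mem hi hzz
  exact mem_verts.mpr ⟨γ', i', hi', hp⟩

theorem phiV' {g z : DihedralArtinGroup n} (hz : z ∈ precellVerts n (iot n g)) :
    phi n z ∈ precellVerts n g := by
  have := phiV hz
  rwa [iot_invol] at this

end Iota

/-! ### the main configuration lemmas -/

section Config
variable {n : ℕ}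

theorem len_eq3 {a b c d : Bool} {A B C D : ℕ}
    (h : S n a A * (S n b B * S n c C) = S n d D) : A + B + C = D := by
  have h1 := congrArg (ell n) h
  rw [map_mul, map_mul, ell_S, ell_S, ell_S, ell_S, ← ofAdd_add, ← ofAdd_add] at h1
  have h2 := Multiplicative.ofAdd.injective h1
  omega

theorem oneBad (hn : 2 ≤ n) (q : Bool) {d j L : ℕ}
    (hd1 : 1 ≤ d) (hd2 : d ≤ n - 1) (hj1 : 1 ≤ j) (hj2 : j ≤ n - 1)
    (hL : L = d + j) :
    S n (!q) L ≠ S n q d * S n (lst q d) j := by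
  intro h
  by_cases hLn : L ≤ n
  · subst hL
    exact R2 hn q (!q) d j hd1 hd2 hj1 hLn h.symm
  · push_neg at hLn
    have hsplit : S n (!q) L = S n q d * (S n (nxt q d) (n - d) * S n (nxt (!q) n) (L - n)) := by
      have h1 : S n (!q) L = S n (!q) n * S n (nxt (!q) n) (L - n) := by
        conv_lhs => rw [show L = n + (L - n) from by omega]
        rw [S_mul]
      have hd' := S_delta n q d (by omega)
      rw [show Dl n = S n true n from rfl] at hd'
      have h2 : S n (!q) n = S n q d * S n (nxt q d) (n - d) := by
        rw [S_top, ← hd']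
      rw [h1, h2, mul_assoc]
    rw [hsplit] at h
    have hc : S n (nxt q d) (n - d) * S n (nxt (!q) n) (L - n) = S n (lst q d) j :=
      mul_left_cancel h
    have hbad : nxt (!q) n = lst (nxt q d) (n - d) := by
      have e1 : lst (nxt q d) (n - d) = nxt q (n - 1) := by
        unfold lst
        rw [← nxt_add]
        congr 1
        omega
      have e2 : nxt (!q) n = nxt q (n - 1) := by
        rw [nxt_not]
        conv_lhs => rw [show n = (n - 1) + 1 from by omega]
        rw [nxt_succ', Bool.not_not]
      rw [e1, e2]
    rw [hbad] at hc
    rw [show j = (n - d) + (L - n) from by omega] at hc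
    exact R2 hn (nxt q d) (lst q d) (n - d) (L - n) (by omega) (by omega) (by omega)
      (by omega) hc

/-- In the `(+,+)` configuration with opposite letters, every common point of the two
precells is the point `g₁Δ`. -/
theorem ppPoint (hn : 2 ≤ n) {g1 g2 g3 : DihedralArtinGroup n} {p : Bool} {d2 d3 : ℕ}
    (hd21 : 1 ≤ d2) (hd22 : d2 ≤ n - 1) (hd31 : 1 ≤ d3) (hd32 : d3 ≤ n - 1)
    (h2 : g2 = g1 * S n p d2) (h3 : g3 = g1 * S n (!p) d3)
    {z : DihedralArtinGroup n} (hz2 : z ∈ precellVerts n g2) (hz3 : z ∈ precellVerts n g3) :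
    z = g1 * S n true n := by
  obtain ⟨α, i, hi, e2⟩ := mem_verts.mp hz2
  obtain ⟨β, j, hj, e3⟩ := mem_verts.mp hz3
  have E : S n p d2 * S n α i = S n (!p) d3 * S n β j := by
    apply mul_left_cancel (a := g1)
    rw [← mul_assoc, ← h2, ← mul_assoc, ← h3, ← e2, ← e3]
  have hlen : d2 + i = d3 + j := len_eq22 E
  rcases SN hn p d2 hd21 α i hi with hg2 | ⟨hb2, hi1, hi2⟩
  · rcases SN hn (!p) d3 hd31 β j hj with hg3 | ⟨hb3, hj1, hj2⟩
    · -- good/good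
      have E2 : S n p (d2 + i) = S n (!p) (d3 + j) := by rw [← hg2, ← hg3, E]
      rw [← hlen] at E2
      rcases lt_trichotomy (d2 + i) n with hL | hL | hL
      · exact absurd E2 (R1 hn p (d2 + i) (by omega) (by omega))
      · rw [e2, h2, mul_assoc, hg2, hL, S_top]
      · exfalso
        have hsplit : ∀ q : Bool, S n q (d2 + i) =
            S n true n * S n (nxt q n) (d2 + i - n) := by
          intro q
          conv_lhs => rw [show d2 + i = n + (d2 + i - n) from by omega]
          rw [S_mul, S_top]
        rw [hsplit p, hsplit (!p)] at E2
        have hc := mul_left_cancel E2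
        rw [nxt_not] at hc
        exact R1 hn (nxt p n) (d2 + i - n) (by omega) (by omega) hc
    · -- good2 / bad3
      exfalso
      have E2 : S n (!(!p)) (d3 + j) = S n (!p) d3 * S n (lst (!p) d3) j := by
        rw [Bool.not_not, ← hlen, ← hg2, E, hb3]
      exact oneBad hn (!p) hd31 hd32 hj1 hj2 rfl E2
  · rcases SN hn (!p) d3 hd31 β j hj with hg3 | ⟨hb3, hj1, hj2⟩
    · -- bad2 / good3
      exfalso
      have E2 : S n (!p) (d2 + i) = S n p d2 * S n (lst p d2) i := by
        rw [hlen, ← hg3, ← E, hb2]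
      exact oneBad hn p hd21 hd22 hi1 hi2 rfl E2
    · -- bad / bad
      exfalso
      rw [hb2, hb3] at E
      exact R3 hn p d2 i d3 j hd21 hd22 hi1 hi2 hd31 hd32 hj1 hj2 E

theorem ppCore (hn : 2 ≤ n) {g1 g2 g3 : DihedralArtinGroup n} {p : Bool} {d2 d3 : ℕ}
    (hd21 : 1 ≤ d2) (hd32 : d3 ≤ n - 1) (hlt : d2 < d3)
    (h2 : g2 = g1 * S n p d2) (h3 : g3 = g1 * S n p d3)
    (hv : (precellVerts n g1 ∩ precellVerts n g2 ∩ precellVerts n g3).Subsingleton) :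
    False := by
  have hu1 : g1 * S n true n ∈ precellVerts n g1 := mem_verts.mpr ⟨true, n, le_rfl, rfl⟩
  have hu2 : g1 * S n true n ∈ precellVerts n g2 := by
    refine mem_verts.mpr ⟨nxt p d2, n - d2, by omega, ?_⟩
    rw [h2, mul_assoc, ← S_mul, show d2 + (n - d2) = n from by omega, S_top n p]
  have hu3 : g1 * S n true n ∈ precellVerts n g3 := by
    refine mem_verts.mpr ⟨nxt p d3, n - d3, by omega, ?_⟩
    rw [h3, mul_assoc, ← S_mul, show d3 + (n - d3) = n from by omega, S_top n p]
  have hv1 : g3 ∈ precellVerts n g1 := mem_verts.mpr ⟨p, d3, by omega, h3⟩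
  have hv2 : g3 ∈ precellVerts n g2 := by
    refine mem_verts.mpr ⟨nxt p d2, d3 - d2, by omega, ?_⟩
    rw [h3, h2, mul_assoc, ← S_mul, show d2 + (d3 - d2) = d3 from by omega]
  have hv3 : g3 ∈ precellVerts n g3 := mem_verts.mpr ⟨true, 0, by omega, by simp⟩
  have heq := hv ⟨⟨hu1, hu2⟩, hu3⟩ ⟨⟨hv1, hv2⟩, hv3⟩
  rw [h3] at heq
  have := S_inj_len n (mul_left_cancel heq)
  omega

theorem pp (hn : 2 ≤ n) {g1 g2 g3 : DihedralArtinGroup n} {p r : Bool} {d2 d3 : ℕ}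
    (hd21 : 1 ≤ d2) (hd22 : d2 ≤ n - 1) (hd31 : 1 ≤ d3) (hd32 : d3 ≤ n - 1)
    (h2 : g2 = g1 * S n p d2) (h3 : g3 = g1 * S n r d3) (h23 : g2 ≠ g3)
    (hv : (precellVerts n g1 ∩ precellVerts n g2 ∩ precellVerts n g3).Subsingleton)
    {x y : DihedralArtinGroup n}
    (hx2 : x ∈ precellVerts n g2) (hx3 : x ∈ precellVerts n g3)
    (hy2 : y ∈ precellVerts n g2) (hy3 : y ∈ precellVerts n g3)
    (hxy : x ≠ y) : False := by
  by_cases hpr : p = r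
  · subst hpr
    rcases lt_trichotomy d2 d3 with h | h | h
    · exact ppCore hn hd21 hd32 h h2 h3 hv
    · exact h23 (by rw [h2, h3, h])
    · have hv' : (precellVerts n g1 ∩ precellVerts n g3 ∩ precellVerts n g2).Subsingleton := by
        intro u hu v hv2
        exact hv ⟨⟨hu.1.1, hu.2⟩, hu.1.2⟩ ⟨⟨hv2.1.1, hv2.2⟩, hv2.1.2⟩
      exact ppCore hn hd31 hd22 h h3 h2 hv'
  · have hr : r = !p := by cases p <;> cases r <;> simp_all
    subst hr
    have hx := ppPoint hn hd21 hd22 hd31 hd32 h2 h3 hx2 hx3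
    have hy := ppPoint hn hd21 hd22 hd31 hd32 h2 h3 hy2 hy3
    exact hxy (hx.trans hy.symm)

/-- In the `(+,−)` configuration every common point of precells 2 and 3 lies in precell 1. -/
theorem pm (hn : 2 ≤ n) {g1 g2 g3 : DihedralArtinGroup n} {p r : Bool} {d2 d3 : ℕ}
    (hd21 : 1 ≤ d2) (hd22 : d2 ≤ n - 1) (hd31 : 1 ≤ d3) (hd32 : d3 ≤ n - 1)
    (h2 : g2 = g1 * S n p d2) (h3 : g1 = g3 * S n r d3)
    {z : DihedralArtinGroup n} (hz2 : z ∈ precellVerts n g2) (hz3 : z ∈ precellVerts n g3) :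
    z ∈ precellVerts n g1 := by
  obtain ⟨α, i, hi, e2⟩ := mem_verts.mp hz2
  obtain ⟨α', i', hi', e3⟩ := mem_verts.mp hz3
  have E : S n r d3 * (S n p d2 * S n α i) = S n α' i' := by
    apply mul_left_cancel (a := g3)
    rw [← mul_assoc, ← h3, ← mul_assoc, ← h2, ← e2, ← e3]
  have hlen : d3 + d2 + i = i' := len_eq3 E
  have hi'n : i' ≤ n := hi'
  by_cases hj1 : p = nxt r d3
  · have hmerge : S n r d3 * S n p d2 = S n r (d3 + d2) := by rw [S_mul, ← hj1]
    by_cases hi0 : i = 0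
    · refine mem_verts.mpr ⟨p, d2, by omega, ?_⟩
      rw [e2, hi0, S_zero, mul_one, h2]
    · by_cases hα : α = nxt p d2
      · refine mem_verts.mpr ⟨p, d2 + i, by omega, ?_⟩
        rw [e2, h2, mul_assoc, S_mul, ← hα]
      · have hαl : α = lst p d2 := by
          rw [lst_eq_not_nxt p hd21, Bool.eq_not_iff]; exact hα
        have hαl2 : α = lst r (d3 + d2) := by
          rw [hαl]
          unfold lst
          rw [hj1, ← nxt_add]
          congr 1
          omega
        exfalso
        have E2 : S n r (d3 + d2) * S n (lst r (d3 + d2)) i = S n α' i' := by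
          rw [← hαl2, ← hmerge, mul_assoc]
          exact E
        rw [show i' = (d3 + d2) + i from by omega] at E2
        exact R2 hn r α' (d3 + d2) i (by omega) (by omega) (by omega) (by omega) E2
  · have hpl : p = lst r d3 := by
      rw [lst_eq_not_nxt r hd31, Bool.eq_not_iff]; exact hj1
    exfalso
    by_cases hi0 : i = 0
    · have E2 : S n r d3 * S n (lst r d3) d2 = S n α' i' := by
        rw [← hpl]
        rw [hi0, S_zero, mul_one] at E
        exact E
      rw [show i' = d3 + d2 from by omega] at E2
      exact R2 hn r α' d3 d2 hd31 hd32 hd21 (by omega) E2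
    · by_cases hα : α = nxt p d2
      · have E2 : S n r d3 * S n (lst r d3) (d2 + i) = S n α' i' := by
          rw [← hpl, S_mul, ← hα, ← mul_assoc, mul_assoc]
          exact E
        rw [show i' = d3 + (d2 + i) from by omega] at E2
        exact R2 hn r α' d3 (d2 + i) hd31 hd32 (by omega) (by omega) E2
      · have hαl : α = lst p d2 := by
          rw [lst_eq_not_nxt p hd21, Bool.eq_not_iff]; exact hα
        have E3 : S n r d3 * S n (lst r d3) d2 * S n (lst (lst r d3) d2) i = S n α' i' := by
          rw [← hpl, ← hαl, mul_assoc]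
          exact E
        rw [show i' = d3 + d2 + i from by omega] at E3
        exact R6 hn r α' d3 d2 i hd31 hd21 (by omega) (by omega) E3

end Config

end DAproof

open DAproof in
/-- If three pairwise distinct precells are such that the first
shares an edge with each of the other two and the triple intersection of their vertex
sets has at most one point, then the second and third precells intersect in at most
one point. -/
theorem precell_pairwise_intersection (n : ℕ) (hn : 2 ≤ n)
    (g₁ g₂ g₃ : DihedralArtinGroup n)
    (h12 : g₁ ≠ g₂) (h13 : g₁ ≠ g₃) (h23 : g₂ ≠ g₃)
    (he12 : (precellEdges n g₁ ∩ precellEdges n g₂).Nonempty)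
    (he13 : (precellEdges n g₁ ∩ precellEdges n g₃).Nonempty)
    (hv : (precellVerts n g₁ ∩ precellVerts n g₂ ∩ precellVerts n g₃).Subsingleton) :
    (precellVerts n g₂ ∩ precellVerts n g₃).Subsingleton := by
  intro x hx y hy
  by_contra hxy
  obtain ⟨δ2, d2, hd21, hd22, hor2⟩ := edge_strip hn h12 he12
  obtain ⟨δ3, d3, hd31, hd32, hor3⟩ := edge_strip hn h13 he13
  rcases hor2 with h2 | h2 <;> rcases hor3 with h3 | h3
  · -- (+,+)
    exact pp hn hd21 hd22 hd31 hd32 h2 h3 h23 hv hx.1 hx.2 hy.1 hy.2 hxy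
  · -- (+,−)
    have m1x := pm hn hd21 hd22 hd31 hd32 h2 h3 hx.1 hx.2
    have m1y := pm hn hd21 hd22 hd31 hd32 h2 h3 hy.1 hy.2
    exact hxy (hv ⟨⟨m1x, hx.1⟩, hx.2⟩ ⟨⟨m1y, hy.1⟩, hy.2⟩)
  · -- (−,+)
    have m1x := pm hn hd31 hd32 hd21 hd22 h3 h2 hx.2 hx.1
    have m1y := pm hn hd31 hd32 hd21 hd22 h3 h2 hy.2 hy.1
    exact hxy (hv ⟨⟨m1x, hx.1⟩, hx.2⟩ ⟨⟨m1y, hy.1⟩, hy.2⟩)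
  · -- (−,−) : transport through the inversion symmetry φ
    have h2' : iot n g₂ = iot n g₁ * S n (lst δ2 d2) d2 := by
      have hh := congrArg (iot n) h2
      rw [map_mul, iot_S] at hh
      exact (eq_mul_inv_iff_mul_eq.mp hh).symm
    have h3' : iot n g₃ = iot n g₁ * S n (lst δ3 d3) d3 := by
      have hh := congrArg (iot n) h3
      rw [map_mul, iot_S] at hh
      exact (eq_mul_inv_iff_mul_eq.mp hh).symm
    have h23' : iot n g₂ ≠ iot n g₃ := by
      intro h
      apply h23
      rw [← iot_invol g₂, h, iot_invol]
    have hv' : (precellVerts n (iot n g₁) ∩ precellVerts n (iot n g₂) ∩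
        precellVerts n (iot n g₃)).Subsingleton := by
      intro u hu v hv2
      have hu' := hv ⟨⟨phiV' hu.1.1, phiV' hu.1.2⟩, phiV' hu.2⟩
        ⟨⟨phiV' hv2.1.1, phiV' hv2.1.2⟩, phiV' hv2.2⟩
      exact phi_inj hu'
    exact pp hn hd21 hd22 hd31 hd32 h2' h3' h23' hv'
      (phiV hx.1) (phiV hx.2) (phiV hy.1) (phiV hy.2)
      (fun h => hxy (phi_inj h))
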